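/- Let L be a locally compact Hausdorff topological space that is not compact, such that the C*-algebra C₀(L, ℂ) of continuous functions vanishing at infinity is separable and has no nonzero compact elements. Then there exists an isometric injective star-algebra homomorphism D from the C*-algebra C_b(L, ℂ) of bounded continuous functions (BoundedContinuousFunction L ℂ) into ℓ∞ such that the only element of the range of D lying in c0 is 0; moreover, the range of D (equivalently, C_b(L, ℂ)) is not a separable topological space. -/

import Mathlib

open Filter Topology ZeroAtInfty ENNReal

noncomputable section

/-- `ℓ∞`, the bounded complex sequences. -/
abbrev linf : Type := lp (fun _ : ℕ => ℂ) ∞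

/-- `c₀`, the elements of `ℓ∞` tending to zero. -/
def c0 : Set linf := {f | Tendsto (fun n => (f : ∀ _ : ℕ, ℂ) n) atTop (𝓝 0)}

open Set in
theorem aux_secondCountable (L : Type*) [TopologicalSpace L] [LocallyCompactSpace L] [T2Space L]
    [TopologicalSpace.SeparableSpace C₀(L, ℂ)] : SecondCountableTopology L := by
  obtain ⟨𝒟, hcount, hdense⟩ := TopologicalSpace.exists_countable_dense C₀(L, ℂ)
  refine TopologicalSpace.IsTopologicalBasis.secondCountableTopology
    (b := (fun g : C₀(L, ℂ) => {z : L | 1/2 < ‖g z‖}) '' 𝒟) ?_ (hcount.image _)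
  refine TopologicalSpace.isTopologicalBasis_of_isOpen_of_nhds ?_ ?_
  · rintro u ⟨g, -, rfl⟩
    exact isOpen_lt continuous_const (map_continuous g).norm
  · intro x U hxU hU
    obtain ⟨f, h1, h0, hcs, hrange⟩ :=
      exists_continuous_one_zero_of_isCompact (isCompact_singleton (x := x))
        hU.isClosed_compl (by simpa using hxU)
    set F : C₀(L, ℂ) :=
      { toFun := fun z => (f z : ℂ)
        continuous_toFun := Complex.continuous_ofReal.comp f.continuous
        zero_at_infty' := by
          have hev : ∀ᶠ z in cocompact L, ((f z : ℂ)) = 0 := by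
            refine Filter.mem_of_superset (Filter.mem_cocompact.mpr
              ⟨tsupport f, hcs, subset_rfl⟩) ?_
            intro z hz
            simp [image_eq_zero_of_notMem_tsupport hz]
          exact Tendsto.congr' (hev.mono fun z hz => hz.symm) tendsto_const_nhds } with hF
    obtain ⟨g, hg𝒟, hgF⟩ := hdense.exists_dist_lt F (by norm_num : (0:ℝ) < 1/3)
    have key : ∀ z, dist (g z) (F z) < 1/3 := by
      intro z
      calc dist (g z) (F z) = dist (g.toBCF z) (F.toBCF z) := rfl
        _ ≤ dist g.toBCF F.toBCF := BoundedContinuousFunction.dist_coe_le_dist z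
        _ = dist g F := ZeroAtInftyContinuousMap.dist_toBCF_eq_dist
        _ < 1/3 := by rwa [dist_comm] at hgF
    have hFx : ‖F x‖ = 1 := by
      have : f x = 1 := h1 (mem_singleton x)
      simp [hF, this]
    refine ⟨_, ⟨g, hg𝒟, rfl⟩, ?_, ?_⟩
    · have := key x
      have h2 : ‖F x‖ - dist (g x) (F x) ≤ ‖g x‖ := by
        rw [dist_eq_norm]
        have := norm_sub_norm_le (F x) (g x)
        have h3 : ‖F x - g x‖ = ‖g x - F x‖ := norm_sub_rev _ _
        linarith
      simp only [Set.mem_setOf_eq]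
      rw [hFx] at h2; linarith [key x]
    · intro z hz
      simp only [Set.mem_setOf_eq] at hz
      have hFz : F z ≠ 0 := by
        intro h
        have hk := key z
        rw [h, dist_zero_right] at hk
        linarith
      have : f z ≠ 0 := by
        intro h; apply hFz; simp [hF, h]
      by_contra hzU
      exact this (h0 hzU)

/-- The evaluation map along a sequence of points, as a star algebra hom into `ℓ∞`. -/
def embedMap {L : Type*} [TopologicalSpace L] (u : ℕ → L) :
    BoundedContinuousFunction L ℂ →⋆ₙₐ[ℂ] linf where
  toFun f := ⟨fun n => f (u n),
    memℓp_infty ⟨‖f‖, by rintro r ⟨n, rfl⟩; exact f.norm_coe_le_norm _⟩⟩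
  map_smul' c f := lp.ext (by funext n; simp [lp.coeFn_smul])
  map_zero' := lp.ext (by funext n; simp [lp.coeFn_zero])
  map_add' f g := lp.ext (by funext n; simp [lp.coeFn_add]; rfl)
  map_mul' f g := lp.ext (by funext n; simp [lp.infty_coeFn_mul])
  map_star' f := lp.ext (by funext n; simp [lp.coeFn_star])

open Set in
theorem aux_closed {X : Type*} [TopologicalSpace X] [T1Space X]
    (K : CompactExhaustion X) (S : Set X) (h : ∀ n, (S ∩ K n).Finite) : IsClosed S := by
  rw [← isOpen_compl_iff, isOpen_iff_mem_nhds]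
  intro p hp
  set m := K.find p + 1
  have hpm : p ∈ interior (K m) := K.subset_interior_succ _ (K.mem_find p)
  have hopen : IsOpen (interior (K m) \ (S ∩ K m)) :=
    isOpen_interior.sdiff (h m).isClosed
  refine Filter.mem_of_superset (hopen.mem_nhds ⟨hpm, fun hc => hp hc.1⟩) ?_
  rintro z ⟨hz1, hz2⟩ hzS
  exact hz2 ⟨hzS, interior_subset hz1⟩

theorem aux_not_separable {L : Type*} [TopologicalSpace L] [LocallyCompactSpace L] [T2Space L]
    [SecondCountableTopology L] (hnc : ¬ CompactSpace L) :
    ¬ TopologicalSpace.SeparableSpace (BoundedContinuousFunction L ℂ) := by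
  haveI : SigmaCompactSpace L := inferInstance
  set K := CompactExhaustion.choice L with hK
  have hne : ∀ n, ((K n : Set L))ᶜ.Nonempty := by
    intro n
    rw [Set.nonempty_compl]
    intro h
    exact hnc (isCompact_univ_iff.mp (h ▸ K.isCompact n))
  choose x hx using fun n => hne n
  simp only [Set.mem_compl_iff] at hx
  set T := Set.range x with hT
  have hTm : ∀ m, (T ∩ K m) ⊆ x '' (Set.Iio m) := by
    rintro m z ⟨⟨n, rfl⟩, hzK⟩
    refine ⟨n, ?_, rfl⟩
    by_contra hnm
    simp only [Set.mem_Iio, not_lt] at hnm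
    exact hx n (K.subset hnm hzK)
  have hclosed : ∀ S ⊆ T, IsClosed S := fun S hS =>
    aux_closed K S fun m => ((Set.finite_Iio m).image x).subset
      fun z hz => hTm m ⟨hS hz.1, hz.2⟩
  have hTinf : T.Infinite := by
    intro hfin'
    set m := hfin'.toFinset.sup (fun z => K.find z) + 1 with hm
    refine hx m (K.subset ?_ (K.mem_find (x m)))
    exact (Finset.le_sup (f := fun z => K.find z) (hfin'.mem_toFinset.mpr ⟨m, rfl⟩)).trans
      (Nat.le_succ _)
  haveI := hTinf.to_subtype
  set e := Infinite.natEmbedding ↥T with he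
  set t : ℕ → L := fun n => (e n : L) with ht'
  have ht_inj : Function.Injective t := fun a b hab => e.injective (Subtype.ext hab)
  have ht_range : Set.range t ⊆ T := by rintro - ⟨n, rfl⟩; exact (e n).2
  have hce : IsClosedEmbedding t :=
    IsClosedEmbedding.of_continuous_injective_isClosedMap continuous_of_discreteTopology ht_inj
      (fun C _ => hclosed (t '' C) (by rintro - ⟨c, -, rfl⟩; exact ht_range ⟨c, rfl⟩))
  letI : MetricSpace L := TopologicalSpace.metrizableSpaceMetric L
  set fA : Set ℕ → BoundedContinuousFunction ℕ ℝ := fun A =>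
    ⟨⟨fun n => A.indicator 1 n, continuous_of_discreteTopology⟩, 2, fun a b => by
      by_cases ha : a ∈ A <;> by_cases hb : b ∈ A <;>
        simp [Set.indicator_of_mem, Set.indicator_of_notMem, ha, hb, Real.dist_eq]⟩ with hfA
  have hext : ∀ A : Set ℕ, ∃ g : BoundedContinuousFunction L ℝ, ‖g‖ = ‖fA A‖ ∧ ⇑g ∘ t = fA A :=
    fun A => BoundedContinuousFunction.exists_extension_norm_eq_of_isClosedEmbedding (fA A) hce
  choose g hg1 hg2 using hext
  set hC : Set ℕ → BoundedContinuousFunction L ℂ := fun A =>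
    BoundedContinuousFunction.comp _ Complex.isometry_ofReal.lipschitz (g A) with hhC
  have hsep1 : ∀ A B : Set ℕ, A ≠ B → 1 ≤ dist (hC A) (hC B) := by
    intro A B hAB
    obtain ⟨n, hn⟩ := Set.symmDiff_nonempty.mpr hAB
    have hgA : g A (t n) = fA A n := congr_fun (hg2 A) n
    have hgB : g B (t n) = fA B n := congr_fun (hg2 B) n
    have hd : dist (hC A (t n)) (hC B (t n)) = 1 := by
      show dist ((g A (t n) : ℂ)) ((g B (t n) : ℂ)) = 1
      rw [Complex.isometry_ofReal.dist_eq, hgA, hgB]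
      rw [Set.mem_symmDiff] at hn
      have hval : ∀ (C : Set ℕ) (k : ℕ), (fA C) k = C.indicator 1 k := fun C k => rfl
      rcases hn with ⟨h1, h2⟩ | ⟨h1, h2⟩ <;>
        simp [hval, Set.indicator_of_mem, Set.indicator_of_notMem, h1, h2, Real.dist_eq]
    calc (1:ℝ) = dist (hC A (t n)) (hC B (t n)) := hd.symm
      _ ≤ dist (hC A) (hC B) := BoundedContinuousFunction.dist_coe_le_dist _
  intro hsep
  obtain ⟨Dset, hDc, hDd⟩ := TopologicalSpace.exists_countable_dense (BoundedContinuousFunction L ℂ)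
  choose d hd using fun A => hDd.exists_dist_lt (hC A) (by norm_num : (0:ℝ) < 1/2)
  have hinj : Function.Injective (fun A => (⟨d A, (hd A).1⟩ : ↥Dset)) := by
    intro A B hAB'
    by_contra hne'
    have h1 := hsep1 A B hne'
    have h2 : d A = d B := congrArg Subtype.val hAB'
    have := dist_triangle (hC A) (d A) (hC B)
    rw [h2] at this
    have h3 : dist (d B) (hC B) = dist (hC B) (d B) := dist_comm _ _
    have h4 : dist (hC A) (d B) = dist (hC A) (d A) := by rw [h2]
    linarith [(hd A).2, (hd B).2]
  haveI := hDc.to_subtype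
  have hcnt : Countable (Set ℕ) := hinj.countable
  obtain ⟨i, hi⟩ := (countable_iff_exists_injective (Set ℕ)).mp hcnt
  exact Function.cantor_injective i hi

/-- **Corollary 2.12.** If `L` is a locally compact non-compact Hausdorff space such that
`C₀(L, ℂ)` is separable and has no nonzero compact elements, then the C*-algebra
`C_b(L, ℂ)` of bounded continuous functions embeds isometrically and star-algebraically
into `ℓ∞` with range meeting `c₀` only at `0`; in particular `C_b(L, ℂ)` is not separable. -/
theorem exists_isometric_embedding_of_boundedContinuousFunctions_into_linf
    {L : Type*} [TopologicalSpace L] [LocallyCompactSpace L] [T2Space L]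
    (hnc : ¬ CompactSpace L)
    [TopologicalSpace.SeparableSpace C₀(L, ℂ)]
    (hK : ∀ a : C₀(L, ℂ), IsCompactOperator (fun x : C₀(L, ℂ) => a * x * a) → a = 0) :
    (∃ D : BoundedContinuousFunction L ℂ →⋆ₙₐ[ℂ] linf,
      Isometry D ∧ Function.Injective D ∧ ∀ y ∈ Set.range D, y ∈ c0 → y = 0) ∧
      ¬ TopologicalSpace.SeparableSpace (BoundedContinuousFunction L ℂ) := by
  haveI : SecondCountableTopology L := aux_secondCountable L
  haveI hne : Nonempty L := by
    by_contra h
    rw [not_nonempty_iff] at h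
    exact hnc ⟨by rw [Set.univ_eq_empty_iff.mpr h]; exact isCompact_empty⟩
  refine ⟨?_, aux_not_separable hnc⟩
  set u : ℕ → L := fun n => TopologicalSpace.denseSeq L n.unpair.1 with hu
  have hru : Set.range u = Set.range (TopologicalSpace.denseSeq L) := by
    ext z
    constructor
    · rintro ⟨n, rfl⟩; exact ⟨_, rfl⟩
    · rintro ⟨k, rfl⟩; exact ⟨Nat.pair k 0, by simp [hu]⟩
  have hdu : DenseRange u := by
    unfold DenseRange
    rw [hru]
    exact TopologicalSpace.denseRange_denseSeq L
  have hnorm : ∀ f : BoundedContinuousFunction L ℂ, ‖embedMap u f‖ = ‖f‖ := by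
    intro f
    have hbdd : BddAbove (Set.range fun n => ‖f (u n)‖) :=
      ⟨‖f‖, by rintro r ⟨n, rfl⟩; exact f.norm_coe_le_norm _⟩
    have hrfl : ‖embedMap u f‖ = ⨆ n, ‖f (u n)‖ := rfl
    rw [hrfl]
    refine le_antisymm (ciSup_le fun n => f.norm_coe_le_norm _) ?_
    have hM0 : (0:ℝ) ≤ ⨆ n, ‖f (u n)‖ := le_trans (norm_nonneg _) (le_ciSup hbdd 0)
    refine (BoundedContinuousFunction.norm_le hM0).mpr ?_
    intro z
    have hcl : IsClosed {w : L | ‖f w‖ ≤ ⨆ n, ‖f (u n)‖} :=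
      isClosed_le f.continuous.norm continuous_const
    have hsub : Set.range u ⊆ {w : L | ‖f w‖ ≤ ⨆ n, ‖f (u n)‖} := by
      rintro - ⟨n, rfl⟩; exact le_ciSup hbdd n
    exact hcl.closure_subset_iff.mpr hsub (hdu z)
  have hiso : Isometry (embedMap u) := AddMonoidHomClass.isometry_of_norm (embedMap u) hnorm
  refine ⟨embedMap u, hiso, hiso.injective, ?_⟩
  rintro y ⟨f, rfl⟩ hy
  have hy' : Tendsto (fun n => (embedMap u f : ∀ _ : ℕ, ℂ) n) atTop (𝓝 0) := hy
  have hzero : ∀ k, f (TopologicalSpace.denseSeq L k) = 0 := by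
    intro k
    have hsub : Tendsto (fun m : ℕ => Nat.pair k m) atTop atTop :=
      tendsto_atTop_mono (fun m => Nat.right_le_pair k m) tendsto_id
    have h2 : Tendsto (fun m => (embedMap u f : ∀ _ : ℕ, ℂ) (Nat.pair k m)) atTop (𝓝 0) :=
      hy'.comp hsub
    have h3 : (fun m => (embedMap u f : ∀ _ : ℕ, ℂ) (Nat.pair k m)) =
        fun _ => f (TopologicalSpace.denseSeq L k) := by
      funext m
      show f (u (Nat.pair k m)) = _
      simp [hu]
    rw [h3] at h2
    exact tendsto_nhds_unique tendsto_const_nhds h2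
  have hf0 : f = 0 := by
    ext z
    have hcl : IsClosed {w : L | f w = 0} := isClosed_eq f.continuous continuous_const
    have hsub : Set.range (TopologicalSpace.denseSeq L) ⊆ {w : L | f w = 0} := by
      rintro - ⟨k, rfl⟩; exact hzero k
    simpa using hcl.closure_subset_iff.mpr hsub (TopologicalSpace.denseRange_denseSeq L z)
  rw [hf0, map_zero]
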